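/- Let Z = [[0,1,0,0],[1,1,0,0],[0,0,1,1],[0,0,1,0]] and Π = [[1,0,0,0],[0,0,1,0],[0,1,0,0],[0,0,0,1]], and let 𝟙 = (1,1,1,1). Let m ≥ 1 and let w_1, …, w_m, z_1, …, z_m be natural numbers summing to n−2 (with n ≥ 3), and set M = Z^{z_m}·Π·Z^{w_m}·Π · ⋯ · Z^{z_1}·Π·Z^{w_1}·Π. Then 𝟙ᵗ·M·𝟙 = 2·F_{n+1}, where F denotes the Fibonacci sequence. (This is the number of satisfying states of any strip of triangles on n vertices.) -/

import Mathlib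

open Matrix

private def vv (t : ℕ) : Fin 4 → ℕ :=
  ![Nat.fib (t+1), Nat.fib (t+2), Nat.fib (t+2), Nat.fib (t+1)]

private lemma vv_mul_Z (t : ℕ) :
    vecMul (vv t) (!![0,1,0,0; 1,1,0,0; 0,0,1,1; 0,0,1,0] : Matrix (Fin 4) (Fin 4) ℕ)
      = vv (t+1) := by
  funext i
  fin_cases i <;>
    simp [vv, vecMul, dotProduct, Fin.sum_univ_four, Matrix.vecHead, Matrix.vecTail,
      Nat.fib_add_two] <;> omega

private lemma vv_mul_Pi (t : ℕ) :
    vecMul (vv t) (!![1,0,0,0; 0,0,1,0; 0,1,0,0; 0,0,0,1] : Matrix (Fin 4) (Fin 4) ℕ)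
      = vv t := by
  funext i
  fin_cases i <;>
    simp [vv, vecMul, dotProduct, Fin.sum_univ_four, Matrix.vecHead, Matrix.vecTail]

private lemma vv_mul_Zpow (Z : Matrix (Fin 4) (Fin 4) ℕ)
    (hZ : Z = !![0,1,0,0; 1,1,0,0; 0,0,1,1; 0,0,1,0]) (t k : ℕ) :
    vecMul (vv t) (Z ^ k) = vv (t + k) := by
  induction k with
  | zero => simp
  | succ k ih =>
    rw [pow_succ, ← Matrix.vecMul_vecMul, ih, hZ, vv_mul_Z, ← add_assoc]

private lemma vv_mul_prod (Z Pi : Matrix (Fin 4) (Fin 4) ℕ)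
    (hZ : Z = !![0,1,0,0; 1,1,0,0; 0,0,1,1; 0,0,1,0])
    (hPi : Pi = !![1,0,0,0; 0,0,1,0; 0,1,0,0; 0,0,0,1])
    (w z : ℕ → ℕ) (m t : ℕ) :
    vecMul (vv t) ((((List.range m).map
        (fun i => Z ^ z i * Pi * Z ^ w i * Pi)).reverse).prod)
      = vv (t + ∑ i ∈ Finset.range m, (w i + z i)) := by
  induction m generalizing t with
  | zero => simp
  | succ m ih =>
    rw [List.range_succ, List.map_append, List.reverse_append]
    simp only [List.map_cons, List.map_nil, List.reverse_cons, List.reverse_nil,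
      List.nil_append, List.singleton_append, List.prod_cons]
    rw [← Matrix.vecMul_vecMul]
    have h1 : vecMul (vv t) (Z ^ z m * Pi * Z ^ w m * Pi) = vv (t + z m + w m) := by
      rw [← Matrix.vecMul_vecMul, ← Matrix.vecMul_vecMul, ← Matrix.vecMul_vecMul,
        vv_mul_Zpow Z hZ, hPi, vv_mul_Pi, vv_mul_Zpow Z hZ, vv_mul_Pi]
    rw [h1, ih, Finset.sum_range_succ,
      show t + z m + w m + ∑ i ∈ Finset.range m, (w i + z i)
        = t + (∑ i ∈ Finset.range m, (w i + z i) + (w m + z m)) from by omega]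

theorem strip_number_of_satisfying_states
    (Z Pi : Matrix (Fin 4) (Fin 4) ℕ)
    (hZ : Z = !![0,1,0,0; 1,1,0,0; 0,0,1,1; 0,0,1,0])
    (hPi : Pi = !![1,0,0,0; 0,0,1,0; 0,1,0,0; 0,0,0,1])
    (m n : ℕ) (hm : 1 ≤ m) (hn : 3 ≤ n) (w z : ℕ → ℕ)
    (hsum : ∑ i ∈ Finset.range m, (w i + z i) = n - 2)
    (M : Matrix (Fin 4) (Fin 4) ℕ)
    (hM : M = (((List.range m).map
        (fun i => Z ^ z i * Pi * Z ^ w i * Pi)).reverse).prod) :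
    dotProduct (fun _ => 1) (M *ᵥ (fun _ => 1)) = 2 * Nat.fib (n + 1) := by
  have hone : (fun _ => 1 : Fin 4 → ℕ) = vv 0 := by
    funext i; fin_cases i <;> simp [vv]
  rw [Matrix.dotProduct_mulVec, hM, hone, vv_mul_prod Z Pi hZ hPi w z m 0, hsum]
  obtain ⟨s, rfl⟩ : ∃ s, n = s + 3 := ⟨n - 3, by omega⟩
  simp [vv, dotProduct, Fin.sum_univ_four, Nat.fib_add_two, show s+3-2 = s+1 from rfl]
  ring_nf
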